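/- Let t ≥ 3, a ≥ 1, and a+1 ≤ b ≤ 2a. The rooted graph T_3(a,b) obtained from the Bukh–Conlon tree T_2(a,b) by adding, for each of the b edges, a new unrooted vertex adjacent to both endpoints of that edge, is a balanced rooted graph with rooted density 3b/(a+b). -/
import Mathlib


open Finset

/-- `T_3(a,b)` (for `a+1 ≤ b ≤ 2a`), obtained from the Bukh–Conlon tree `T_2(a,b)`
(a balanced rooted tree `G2` with `a` unrooted vertices, `b` edges, independent roots,
and all unrooted degrees at least `b/a`) by adding for each edge a new unrooted spike
vertex joined to both endpoints, is a balanced rooted graph of rooted density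
`3b/(a+b)`. -/
theorem t3_balanced {W : Type*} [Fintype W] [DecidableEq W]
    (G2 : SimpleGraph W) [DecidableRel G2.Adj] (R2 : Finset W) (a b : ℕ)
    (ha : 1 ≤ a) (hab : a + 1 ≤ b) (hba : b ≤ 2 * a)
    (hacard : (Finset.univ \ R2).card = a)
    (hbcard : G2.edgeFinset.card = b)
    (hRind : ∀ u ∈ R2, ∀ v ∈ R2, ¬ G2.Adj u v)
    (hbal : ∀ S ⊆ Finset.univ \ R2, S.Nonempty →
      (b : ℝ) / a ≤ ((G2.edgeFinset.filter (fun ed => ∃ v ∈ S, v ∈ ed)).card : ℝ) / S.card)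
    (hdeg : ∀ w : W, w ∉ R2 → (b : ℝ) / a ≤ (G2.degree w : ℝ))
    (F : SimpleGraph (W ⊕ G2.edgeSet))
    (hF1 : ∀ w w' : W, F.Adj (Sum.inl w) (Sum.inl w') ↔ G2.Adj w w')
    (hF2 : ∀ (w : W) (e : G2.edgeSet), F.Adj (Sum.inl w) (Sum.inr e) ↔ w ∈ (e : Sym2 W))
    (hF3 : ∀ e e' : G2.edgeSet, ¬ F.Adj (Sum.inr e) (Sum.inr e'))
    [DecidableRel F.Adj] [DecidableEq (W ⊕ G2.edgeSet)]
    (R : Finset (W ⊕ G2.edgeSet))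
    (hR : R = R2.map ⟨Sum.inl, Sum.inl_injective⟩)
    (d : Finset (W ⊕ G2.edgeSet) → ℝ)
    (hd : ∀ S, d S =
      ((F.edgeFinset.filter (fun ed => ∃ v ∈ S, v ∈ ed)).card : ℝ) / S.card) :
    (∀ S ⊆ Finset.univ \ R, S.Nonempty → d (Finset.univ \ R) ≤ d S) ∧
    d (Finset.univ \ R) = 3 * (b : ℝ) / ((a : ℝ) + b) := by
  subst hR
  have hinlR : ∀ w : W, (Sum.inl w : W ⊕ G2.edgeSet) ∈ (R2.map ⟨Sum.inl, Sum.inl_injective⟩ : Finset (W ⊕ G2.edgeSet)) ↔ w ∈ R2 := by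
    intro w; simp
  have hd2 : ∀ T : Finset (W ⊕ G2.edgeSet), d T =
      ((F.edgeFinset.filter (fun ed => ∃ v ∈ T, v ∈ ed)).card : ℝ) / T.card := by
    intro T
    rw [hd]
  have hEcard : Fintype.card G2.edgeSet = b := by
    rw [← SimpleGraph.edgeFinset_card, hbcard]
  -- spike degrees
  have hrep : ∀ e : G2.edgeSet, ∃ u v, G2.Adj u v ∧ (e : Sym2 W) = s(u, v) := by
    rintro ⟨e, he⟩
    induction e with
    | _ u v => exact ⟨u, v, he, rfl⟩
  have hdeg2 : ∀ e : G2.edgeSet, F.degree (Sum.inr e) = 2 := by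
    intro e
    obtain ⟨u, v, huv, he⟩ := hrep e
    have hnbr : F.neighborFinset (Sum.inr e) = {Sum.inl u, Sum.inl v} := by
      ext x
      cases x with
      | inl w =>
        simp only [SimpleGraph.mem_neighborFinset, mem_insert, mem_singleton]
        rw [F.adj_comm, hF2, he, Sym2.mem_iff]
        simp
      | inr e' =>
        simp only [SimpleGraph.mem_neighborFinset, mem_insert, mem_singleton]
        simp [hF3 e e']
    rw [← SimpleGraph.card_neighborFinset_eq_degree, hnbr]
    rw [card_insert_of_notMem (by simp [huv.ne]), card_singleton]
  have hmapedge : ∀ ed ∈ G2.edgeFinset, Sym2.map Sum.inl ed ∈ F.edgeFinset := by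
    intro ed
    induction ed with
    | _ u v =>
      intro hed
      rw [SimpleGraph.mem_edgeFinset, SimpleGraph.mem_edgeSet] at hed
      rw [SimpleGraph.mem_edgeFinset, Sym2.map_pair_eq, SimpleGraph.mem_edgeSet]
      exact (hF1 u v).2 hed
  have hincdisj : ∀ e e' : G2.edgeSet, e ≠ e' →
      Disjoint (F.incidenceFinset (Sum.inr e)) (F.incidenceFinset (Sum.inr e')) := by
    intro e e' hne
    rw [Finset.disjoint_left]
    intro ed h1 h2
    rw [SimpleGraph.mem_incidenceFinset] at h1 h2
    have h3 : ed = s(Sum.inr e, Sum.inr e') :=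
      (Sym2.mem_and_mem_iff (by simp [hne])).1 ⟨h1.2, h2.2⟩
    have h4 := h1.1
    rw [h3, SimpleGraph.mem_edgeSet] at h4
    exact hF3 e e' h4
  have hinccard : ∀ e : G2.edgeSet, (F.incidenceFinset (Sum.inr e)).card = 2 := by
    intro e
    rw [SimpleGraph.card_incidenceFinset_eq_degree, hdeg2]
  have hincmem : ∀ (x : W ⊕ G2.edgeSet) (ed : Sym2 (W ⊕ G2.edgeSet)),
      ed ∈ F.incidenceFinset x ↔ ed ∈ F.edgeSet ∧ x ∈ ed := by
    intro x ed
    rw [SimpleGraph.mem_incidenceFinset]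
    exact Iff.rfl
  -- main counting inequality
  have hmain : ∀ S : Finset (W ⊕ G2.edgeSet),
      S ⊆ Finset.univ \ (R2.map ⟨Sum.inl, Sum.inl_injective⟩ : Finset (W ⊕ G2.edgeSet)) → S.Nonempty →
      3 * (b : ℝ) * S.card ≤ d S * S.card * ((a : ℝ) + b) := by
    intro S hS hSne
    set SW : Finset W := (Finset.univ \ R2).filter (fun w => Sum.inl w ∈ S) with hSWdef
    set SE : Finset G2.edgeSet := Finset.univ.filter (fun e => Sum.inr e ∈ S) with hSEdef
    have hSWmem : ∀ w : W, w ∈ SW ↔ Sum.inl w ∈ S := by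
      intro w
      simp only [hSWdef, mem_filter, mem_sdiff, mem_univ, true_and]
      constructor
      · exact fun h => h.2
      · intro h
        refine ⟨fun hw => ?_, h⟩
        have h2 := hS h
        rw [mem_sdiff] at h2
        exact h2.2 ((hinlR w).2 hw)
    have hSEmem : ∀ e : G2.edgeSet, e ∈ SE ↔ Sum.inr e ∈ S := by
      intro e; simp [hSEdef]
    have hScard : S.card = SW.card + SE.card := by
      have hrw : S = SW.image Sum.inl ∪ SE.image Sum.inr := by
        ext x
        cases x with
        | inl w => simp [mem_union, mem_image, hSWmem, hSEmem]
        | inr e => simp [mem_union, mem_image, hSWmem, hSEmem]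
      rw [hrw, card_union_of_disjoint, card_image_of_injective _ Sum.inl_injective,
        card_image_of_injective _ Sum.inr_injective]
      rw [disjoint_left]
      rintro x hx hx'
      simp only [mem_image] at hx hx'
      obtain ⟨w, _, rfl⟩ := hx
      obtain ⟨e, _, h⟩ := hx'
      exact Sum.inr_ne_inl h
    set m : ℕ := (G2.edgeFinset.filter (fun ed => ∃ v ∈ SW, v ∈ ed)).card with hmdef
    have hbs : b * SW.card ≤ a * m := by
      rcases SW.eq_empty_or_nonempty with h | h
      · simp [h]
      · have hb := hbal SW (by rw [hSWdef]; exact filter_subset _ _) h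
        have ha' : (0 : ℝ) < a := by exact_mod_cast ha
        have hs' : (0 : ℝ) < SW.card := by exact_mod_cast card_pos.2 h
        rw [div_le_div_iff₀ ha' hs'] at hb
        have : (b : ℝ) * SW.card ≤ (a : ℝ) * m := by rw [← hmdef] at hb; nlinarith [hb]
        exact_mod_cast this
    set X := F.edgeFinset.filter (fun ed => ∃ v ∈ S, v ∈ ed) with hXdef
    set A := (G2.edgeFinset.filter (fun ed => ∃ v ∈ SW, v ∈ ed)).image
      (Sym2.map (Sum.inl : W → W ⊕ G2.edgeSet)) with hAdef
    have hAcard : A.card = m := card_image_of_injective _ (Sym2.map.injective Sum.inl_injective)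
    have hAX : A ⊆ X := by
      intro x hx
      rw [hAdef, mem_image] at hx
      obtain ⟨ed0, hed0, rfl⟩ := hx
      rw [mem_filter] at hed0
      obtain ⟨hed0e, v, hvSW, hved⟩ := hed0
      rw [hXdef, mem_filter]
      exact ⟨hmapedge ed0 hed0e, ⟨Sum.inl v, (hSWmem v).1 hvSW, Sym2.mem_map.2 ⟨v, hved, rfl⟩⟩⟩
    set B := Finset.univ.biUnion
      (fun e : G2.edgeSet => (F.incidenceFinset (Sum.inr e)).filter (fun ed => ∃ v ∈ S, v ∈ ed))
      with hBdef
    have hBX : B ⊆ X := by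
      intro x hx
      rw [hBdef, mem_biUnion] at hx
      obtain ⟨e, _, hx⟩ := hx
      rw [mem_filter] at hx
      rw [hXdef, mem_filter]
      exact ⟨SimpleGraph.mem_edgeFinset.2 ((hincmem _ _).1 hx.1).1, hx.2⟩
    have hABdisj : Disjoint A B := by
      rw [disjoint_left]
      intro x hx hx'
      rw [hAdef, mem_image] at hx
      obtain ⟨ed0, _, rfl⟩ := hx
      rw [hBdef, mem_biUnion] at hx'
      obtain ⟨e, _, hx'⟩ := hx'
      rw [mem_filter] at hx'
      have := ((hincmem _ _).1 hx'.1).2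
      rw [Sym2.mem_map] at this
      obtain ⟨w, _, hw⟩ := this
      exact Sum.inl_ne_inr hw
    have hBcard : B.card = ∑ e : G2.edgeSet,
        ((F.incidenceFinset (Sum.inr e)).filter (fun ed => ∃ v ∈ S, v ∈ ed)).card := by
      rw [hBdef]
      exact card_biUnion (fun e _ e' _ h => disjoint_filter_filter (hincdisj e e' h))
    set incSet : Finset G2.edgeSet :=
      Finset.univ.filter (fun e : G2.edgeSet => ∃ v ∈ SW, v ∈ (e : Sym2 W)) with hincdef
    have hincCard : incSet.card = m := by
      have himg : incSet.image Subtype.val = G2.edgeFinset.filter (fun ed => ∃ v ∈ SW, v ∈ ed) := by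
        ext ed
        simp only [hincdef, mem_image, mem_filter, mem_univ, true_and,
          SimpleGraph.mem_edgeFinset]
        constructor
        · rintro ⟨e, he, rfl⟩; exact ⟨e.2, he⟩
        · rintro ⟨hed, hv⟩; exact ⟨⟨ed, hed⟩, hv, rfl⟩
      rw [hmdef, ← himg, card_image_of_injective _ Subtype.val_injective]
    have hc2 : ∀ e ∈ SE,
        ((F.incidenceFinset (Sum.inr e)).filter (fun ed => ∃ v ∈ S, v ∈ ed)).card = 2 := by
      intro e he
      rw [filter_eq_self.2, hinccard]
      intro ed hed
      exact ⟨Sum.inr e, (hSEmem e).1 he, ((hincmem _ _).1 hed).2⟩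
    have hc1 : ∀ e ∈ incSet \ SE,
        1 ≤ ((F.incidenceFinset (Sum.inr e)).filter (fun ed => ∃ v ∈ S, v ∈ ed)).card := by
      intro e he
      rw [mem_sdiff, hincdef, mem_filter] at he
      obtain ⟨⟨-, w, hwSW, hwe⟩, -⟩ := he
      refine card_pos.2 ⟨s(Sum.inl w, Sum.inr e), ?_⟩
      rw [mem_filter, hincmem]
      refine ⟨⟨?_, ?_⟩, ⟨Sum.inl w, (hSWmem w).1 hwSW, ?_⟩⟩
      · rw [SimpleGraph.mem_edgeSet]; exact (hF2 w e).2 hwe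
      · exact Sym2.mem_mk_right _ _
      · exact Sym2.mem_mk_left _ _
    have hsum : 2 * SE.card + (m - SE.card) ≤ ∑ e : G2.edgeSet,
        ((F.incidenceFinset (Sum.inr e)).filter (fun ed => ∃ v ∈ S, v ∈ ed)).card := by
      have h1 : ∑ e ∈ SE ∪ (incSet \ SE),
          ((F.incidenceFinset (Sum.inr e)).filter (fun ed => ∃ v ∈ S, v ∈ ed)).card ≤
          ∑ e : G2.edgeSet,
          ((F.incidenceFinset (Sum.inr e)).filter (fun ed => ∃ v ∈ S, v ∈ ed)).card :=
        sum_le_sum_of_subset (subset_univ _)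
      have h2 : ∑ e ∈ SE ∪ (incSet \ SE),
          ((F.incidenceFinset (Sum.inr e)).filter (fun ed => ∃ v ∈ S, v ∈ ed)).card =
          (∑ e ∈ SE, ((F.incidenceFinset (Sum.inr e)).filter (fun ed => ∃ v ∈ S, v ∈ ed)).card) +
          ∑ e ∈ incSet \ SE,
            ((F.incidenceFinset (Sum.inr e)).filter (fun ed => ∃ v ∈ S, v ∈ ed)).card := by
        apply sum_union
        exact disjoint_sdiff
      have h3 : ∑ e ∈ SE,
          ((F.incidenceFinset (Sum.inr e)).filter (fun ed => ∃ v ∈ S, v ∈ ed)).card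
          = 2 * SE.card := by
        rw [sum_congr rfl hc2, sum_const, smul_eq_mul, mul_comm]
      have h4 : (incSet \ SE).card ≤ ∑ e ∈ incSet \ SE,
          ((F.incidenceFinset (Sum.inr e)).filter (fun ed => ∃ v ∈ S, v ∈ ed)).card := by
        calc (incSet \ SE).card = ∑ _e ∈ incSet \ SE, 1 := by rw [sum_const, smul_eq_mul, mul_one]
        _ ≤ _ := sum_le_sum hc1
      have h5 : m - SE.card ≤ (incSet \ SE).card := by
        have := le_card_sdiff SE incSet
        omega
      omega
    have hXge : m + (2 * SE.card + (m - SE.card)) ≤ X.card := by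
      calc m + (2 * SE.card + (m - SE.card)) ≤ A.card + B.card := by
            rw [hAcard, hBcard]; omega
      _ = (A ∪ B).card := (card_union_of_disjoint hABdisj).symm
      _ ≤ X.card := card_le_card (union_subset hAX hBX)
    -- real arithmetic
    have hb1 : (b : ℝ) * SW.card ≤ (a : ℝ) * m := by exact_mod_cast hbs
    have hba' : (b : ℝ) ≤ 2 * a := by exact_mod_cast hba
    have hab' : (a : ℝ) ≤ b := by exact_mod_cast (by omega : a ≤ b)
    have hdS : d S * S.card = (X.card : ℝ) := by
      rw [hd2, hXdef, div_mul_cancel₀]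
      exact Nat.cast_ne_zero.2 (card_pos.2 hSne).ne'
    rw [hdS, hScard]
    push_cast
    rcases le_total SE.card m with h | h
    · have hX' : 2 * (m : ℝ) + SE.card ≤ X.card := by
        have h6 : 2 * m + SE.card ≤ X.card := by omega
        exact_mod_cast h6
      have h7 : (SE.card : ℝ) ≤ m := by exact_mod_cast h
      nlinarith [mul_nonneg (by linarith : (0:ℝ) ≤ 2*(b:ℝ) - a)
        (by linarith : (0:ℝ) ≤ (m:ℝ) - SE.card)]
    · have hX' : (m : ℝ) + 2 * SE.card ≤ X.card := by
        have h6 : m + 2 * SE.card ≤ X.card := by omega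
        exact_mod_cast h6
      have h7 : (m : ℝ) ≤ SE.card := by exact_mod_cast h
      nlinarith [mul_nonneg (by linarith : (0:ℝ) ≤ 2*(a:ℝ) - b)
        (by linarith : (0:ℝ) ≤ (SE.card:ℝ) - m)]
  -- size of the unrooted set
  have hUcard : (Finset.univ \ (R2.map ⟨Sum.inl, Sum.inl_injective⟩ : Finset (W ⊕ G2.edgeSet))).card = a + b := by
    have h1 : (Finset.univ \ (R2.map ⟨Sum.inl, Sum.inl_injective⟩ : Finset (W ⊕ G2.edgeSet))).card =
        Fintype.card (W ⊕ G2.edgeSet) - R2.card := by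
      rw [card_sdiff_of_subset (subset_univ _), card_univ, card_map]
    have h2 : Fintype.card (W ⊕ G2.edgeSet) = Fintype.card W + b := by
      rw [Fintype.card_sum, hEcard]
    have h3 : Fintype.card W - R2.card = a := by
      rw [← hacard, card_sdiff_of_subset (subset_univ _), card_univ]
    have h4 : R2.card ≤ Fintype.card W := by
      rw [← card_univ]; exact card_le_card (subset_univ _)
    omega
  -- total number of edges of F
  have hEF : F.edgeFinset.card = 3 * b := by
    have hT : F.edgeFinset.filter (fun ed => ¬ ∃ e : G2.edgeSet, Sum.inr e ∈ ed) =
        G2.edgeFinset.image (Sym2.map Sum.inl) := by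
      apply Subset.antisymm
      · intro ed
        induction ed with
        | _ x y =>
          intro hed
          rw [mem_filter] at hed
          obtain ⟨h1, h2⟩ := hed
          rw [SimpleGraph.mem_edgeFinset, SimpleGraph.mem_edgeSet] at h1
          cases x with
          | inr e => exact absurd ⟨e, Sym2.mem_mk_left _ _⟩ h2
          | inl u => cases y with
            | inr e => exact absurd ⟨e, Sym2.mem_mk_right _ _⟩ h2
            | inl v =>
              rw [hF1] at h1
              exact mem_image.2 ⟨s(u, v),
                by rwa [SimpleGraph.mem_edgeFinset, SimpleGraph.mem_edgeSet],
                by rw [Sym2.map_pair_eq]⟩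
      · intro ed hed
        rw [mem_image] at hed
        obtain ⟨ed0, hed0, rfl⟩ := hed
        rw [mem_filter]
        refine ⟨hmapedge ed0 hed0, ?_⟩
        rintro ⟨e, he⟩
        rw [Sym2.mem_map] at he
        obtain ⟨w, -, hw⟩ := he
        exact Sum.inl_ne_inr hw
    have hTcard : (F.edgeFinset.filter (fun ed => ¬ ∃ e : G2.edgeSet, Sum.inr e ∈ ed)).card
        = b := by
      rw [hT, card_image_of_injective _ (Sym2.map.injective Sum.inl_injective), hbcard]
    have hSp : F.edgeFinset.filter (fun ed => ∃ e : G2.edgeSet, Sum.inr e ∈ ed) =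
        Finset.univ.biUnion (fun e : G2.edgeSet => F.incidenceFinset (Sum.inr e)) := by
      ext ed
      simp only [mem_filter, mem_biUnion, mem_univ, true_and, hincmem,
        SimpleGraph.mem_edgeFinset]
      constructor
      · rintro ⟨h1, e, he⟩; exact ⟨e, h1, he⟩
      · rintro ⟨e, h1, h2⟩; exact ⟨h1, e, h2⟩
    have hSpcard : (F.edgeFinset.filter (fun ed => ∃ e : G2.edgeSet, Sum.inr e ∈ ed)).card
        = 2 * b := by
      rw [hSp, card_biUnion (fun e _ e' _ h => hincdisj e e' h)]
      rw [sum_congr rfl (fun e _ => hinccard e), sum_const, smul_eq_mul, card_univ, hEcard,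
        mul_comm]
    have := card_filter_add_card_filter_not
      (s := F.edgeFinset) (p := fun ed => ∃ e : G2.edgeSet, Sum.inr e ∈ ed)
    omega
  -- full density
  have habpos : (0 : ℝ) < (a : ℝ) + b := by
    have : (1 : ℝ) ≤ a := by exact_mod_cast ha
    linarith
  have hUne : (Finset.univ \ (R2.map ⟨Sum.inl, Sum.inl_injective⟩ : Finset (W ⊕ G2.edgeSet))).Nonempty := by
    rw [← card_pos, hUcard]; omega
  have hmain' : ∀ S ⊆ Finset.univ \ (R2.map ⟨Sum.inl, Sum.inl_injective⟩ : Finset (W ⊕ G2.edgeSet)),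
      S.Nonempty → 3 * (b : ℝ) / ((a : ℝ) + b) ≤ d S := by
    intro S hS hSne
    have h := hmain S hS hSne
    have hSpos : (0 : ℝ) < S.card := by exact_mod_cast card_pos.2 hSne
    rw [div_le_iff₀ habpos]
    refine le_of_mul_le_mul_right ?_ hSpos
    calc 3 * (b : ℝ) * S.card ≤ d S * S.card * ((a : ℝ) + b) := h
    _ = d S * ((a : ℝ) + b) * S.card := by ring
  have h2 : d (Finset.univ \ (R2.map ⟨Sum.inl, Sum.inl_injective⟩ : Finset (W ⊕ G2.edgeSet))) ≤
      3 * (b : ℝ) / ((a : ℝ) + b) := by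
    rw [hd2, hUcard]
    push_cast
    rw [div_le_div_iff₀ habpos habpos]
    gcongr
    exact_mod_cast (card_le_card (filter_subset _ _)).trans (le_of_eq hEF)
  have hdU : d (Finset.univ \ (R2.map ⟨Sum.inl, Sum.inl_injective⟩ : Finset (W ⊕ G2.edgeSet))) =
      3 * (b : ℝ) / ((a : ℝ) + b) :=
    le_antisymm h2 (hmain' _ (Finset.Subset.refl _) hUne)
  refine ⟨?_, hdU⟩
  intro S hS hSne
  rw [hdU]
  exact hmain' S hS hSne
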